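/- Let k > 0 be a real number and define ψ(x,y) = ln( (k/2) · (coth²(√k · x) − 1/3) ) for x ≠ 0, y ∈ ℝ. Then ψ is a solution of the Tzitzéica equation with affine mean curvature H = −1 and cubic-form modulus |U|² = k³/27; explicitly, for all x ≠ 0 and all y, (1/4)(∂²ψ/∂x² + ∂²ψ/∂y²) − e^{ψ(x,y)} + (k³/27) · e^{−2ψ(x,y)} = 0. -/

import Mathlib

/-- Real hyperbolic cotangent. -/
noncomputable def coth (x : ℝ) : ℝ := Real.cosh x / Real.sinh x

/-- `ψ(x,y) = ln( (k/2)(coth²(√k x) − 1/3) )`. -/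
noncomputable def ψ (k x y : ℝ) : ℝ :=
  Real.log (k / 2 * ((coth (Real.sqrt k * x)) ^ 2 - 1 / 3))

lemma coth_sq_gt_one {t : ℝ} (ht : t ≠ 0) : 1 < coth t ^ 2 := by
  have hs : Real.sinh t ≠ 0 := Real.sinh_ne_zero.2 ht
  have h2 : (0:ℝ) < Real.sinh t ^ 2 := by positivity
  rw [coth, div_pow, lt_div_iff₀ h2]
  nlinarith [Real.cosh_sq t]

lemma hasDerivAt_coth {t : ℝ} (ht : t ≠ 0) :
    HasDerivAt coth (1 - coth t ^ 2) t := by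
  have hs : Real.sinh t ≠ 0 := Real.sinh_ne_zero.2 ht
  have h := (Real.hasDerivAt_cosh t).div (Real.hasDerivAt_sinh t) hs
  refine h.congr_deriv ?_
  rw [coth, div_pow]
  field_simp

lemma hasDerivAt_coth_mul {a s : ℝ} (ha : a ≠ 0) (hs : s ≠ 0) :
    HasDerivAt (fun u => coth (a * u)) (a * (1 - coth (a * s) ^ 2)) s := by
  have h := (hasDerivAt_coth (mul_ne_zero ha hs)).comp s
    ((hasDerivAt_id s).const_mul a)
  simpa [mul_comm, Function.comp_def] using h

noncomputable def G (a s : ℝ) : ℝ :=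
  a ^ 2 * a * coth (a * s) * (1 - coth (a * s) ^ 2) /
    (a ^ 2 / 2 * (coth (a * s) ^ 2 - 1 / 3))

lemma F_pos {a s : ℝ} (ha0 : 0 < a) (hs : s ≠ 0) :
    0 < a ^ 2 / 2 * (coth (a * s) ^ 2 - 1 / 3) := by
  have := coth_sq_gt_one (mul_ne_zero ha0.ne' hs)
  nlinarith

lemma psi_hasDerivAt {a s : ℝ} (y : ℝ) (ha0 : 0 < a) (hs : s ≠ 0) :
    HasDerivAt (fun u => ψ (a ^ 2) u y) (G a s) s := by
  have hsq : Real.sqrt (a ^ 2) = a := Real.sqrt_sq ha0.le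
  have hc := hasDerivAt_coth_mul ha0.ne' hs
  have hF : HasDerivAt (fun u => a ^ 2 / 2 * (coth (a * u) ^ 2 - 1 / 3))
      (a ^ 2 / 2 * (2 * coth (a * s) ^ (2 - 1) * (a * (1 - coth (a * s) ^ 2)))) s :=
    (((hc.pow 2).sub_const (1 / 3)).const_mul _)
  have hFpos := F_pos ha0 hs
  have h := hF.log hFpos.ne'
  have heq : (fun u => ψ (a ^ 2) u y)
      = fun u => Real.log (a ^ 2 / 2 * (coth (a * u) ^ 2 - 1 / 3)) := by
    funext u; rw [ψ, hsq]
  rw [heq]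
  convert h using 1
  rw [G]
  congr 1
  ring

/-- `ψ` solves the Tzitzéica equation with `H = −1` and `|U|² = k³/27`. -/
theorem tzitzeica_semihomogeneous (k : ℝ) (hk : 0 < k) :
    ∀ x : ℝ, x ≠ 0 → ∀ y : ℝ,
      (1 / 4) * (deriv (deriv fun s => ψ k s y) x + deriv (deriv fun s => ψ k x s) y)
          - Real.exp (ψ k x y) + (k ^ 3 / 27) * Real.exp (-2 * ψ k x y) = 0 := by
  obtain ⟨a, ha0, rfl⟩ : ∃ a : ℝ, 0 < a ∧ a ^ 2 = k :=
    ⟨Real.sqrt k, Real.sqrt_pos.2 hk, Real.sq_sqrt hk.le⟩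
  intro x hx y
  have hsq : Real.sqrt (a ^ 2) = a := Real.sqrt_sq ha0.le
  have hy : (deriv fun s => ψ (a ^ 2) x s) = fun _ => (0:ℝ) := by
    funext s
    have : (fun s : ℝ => ψ (a ^ 2) x s)
        = fun _ => Real.log (a ^ 2 / 2 * ((coth (Real.sqrt (a^2) * x)) ^ 2 - 1 / 3)) := by
      funext u; rw [ψ]
    rw [this, deriv_const]
  have hev : (deriv fun s => ψ (a ^ 2) s y) =ᶠ[nhds x] G a := by
    filter_upwards [eventually_ne_nhds hx] with s hs
    exact (psi_hasDerivAt y ha0 hs).deriv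
  have hx2 : deriv (deriv fun s => ψ (a ^ 2) s y) x = deriv (G a) x :=
    hev.deriv_eq
  have hFpos := F_pos ha0 hx
  have hc := hasDerivAt_coth_mul ha0.ne' hx
  have hN := (hc.const_mul (a ^ 2 * a)).mul
      ((hasDerivAt_const x (1:ℝ)).sub (hc.pow 2))
  have hD := (((hc.pow 2).sub_const ((1:ℝ) / 3)).const_mul (a ^ 2 / 2))
  have hG : HasDerivAt (G a) _ x := hN.div hD hFpos.ne'
  simp only [Pi.sub_apply, Pi.pow_apply, Pi.mul_apply, Pi.add_apply, Pi.neg_apply] at hG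
  set c := coth (a * x) with hcdef
  have hψ : ψ (a ^ 2) x y = Real.log (a ^ 2 / 2 * (c ^ 2 - 1 / 3)) := by
    rw [ψ, hsq]
  have he1 : Real.exp (ψ (a ^ 2) x y) = a ^ 2 / 2 * (c ^ 2 - 1 / 3) := by
    rw [hψ, Real.exp_log hFpos]
  have he2 : Real.exp (-2 * ψ (a ^ 2) x y) = 1 / (a ^ 2 / 2 * (c ^ 2 - 1 / 3)) ^ 2 := by
    rw [hψ, neg_mul, Real.exp_neg, two_mul, Real.exp_add, Real.exp_log hFpos]
    rw [inv_eq_one_div]; ring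
  have h31 : c ^ 2 - 1 / 3 ≠ 0 := by
    have := coth_sq_gt_one (mul_ne_zero ha0.ne' hx)
    rw [← hcdef] at this; nlinarith
  have h3 : (3 * c ^ 2 - 1) ≠ 0 := by
    intro h; apply h31; linarith
  rw [hx2, hG.deriv, hy, deriv_const, he1, he2]
  clear hcdef hc hN hD hG hψ he1 he2 hev hx2 hy
  clear_value c
  have hq : a ^ 2 * (c ^ 2 * 3 - 1) ≠ 0 := by
    refine mul_ne_zero (by positivity) fun h => h3 ?_
    linarith
  have h9 : 1 - c ^ 2 * 6 + c ^ 4 * 9 ≠ 0 := by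
    have e : 1 - c ^ 2 * 6 + c ^ 4 * 9 = (3 * c ^ 2 - 1) ^ 2 := by ring
    rw [e]; exact pow_ne_zero 2 h3
  field_simp [ha0.ne', h31, hq, h9]
  have hX : (1 - c ^ 2 * 6 + c ^ 4 * 9)⁻¹ * (1 - c ^ 2 * 6 + c ^ 4 * 9) = 1 := inv_mul_cancel₀ h9
  linear_combination (108 * a ^ 2 * (3 * c ^ 2 - 1)) * hX
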